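/- arXiv:1708.08490 — 4 statements merged into one kernel-verified Lean document; each statement's English description precedes it below -/
import Mathlib

section
/- Let P ∈ (0,2] and h_P(x) = (P/2)(x^2-1)+1. For every nonnegative function h ∈ H^1((-1,1)) with h(-1) = h(1) = 1, the energy E(h) = (1/2)∫_{-1}^{1} |h'(x)|^2 dx + P ∫_{-1}^{1} h(x) dx satisfies E(h) ≥ E(h_P), with equality if and only if h = h_P. -/
open MeasureTheory

theorem stmt3 (P : ℝ) (hP0 : 0 < P) (hP2 : P ≤ 2) (h h' : ℝ → ℝ)
    (hcont : ContinuousOn h (Set.Icc (-1) 1))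
    (hderiv : ∀ x ∈ Set.Icc (-1:ℝ) 1, HasDerivWithinAt h (h' x) (Set.Icc (-1) 1) x)
    (hint : IntervalIntegrable (fun x => (h' x)^2) volume (-1) 1)
    (hnn : ∀ x ∈ Set.Icc (-1:ℝ) 1, 0 ≤ h x)
    (hbcm : h (-1) = 1) (hbcp : h 1 = 1) :
    let hp : ℝ → ℝ := fun x => P/2 * (x^2 - 1) + 1
    let Eh : ℝ := (1/2) * (∫ x in (-1:ℝ)..1, (h' x)^2) + P * (∫ x in (-1:ℝ)..1, h x)
    let Ep : ℝ := (1/2) * (∫ x in (-1:ℝ)..1, (deriv hp x)^2) + P * (∫ x in (-1:ℝ)..1, hp x)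
    Ep ≤ Eh ∧ (Eh = Ep ↔ Set.EqOn h hp (Set.Icc (-1) 1)) := by
  intro hp Eh Ep
  have EhEq : Eh = (1/2) * (∫ x in (-1:ℝ)..1, (h' x)^2) + P * (∫ x in (-1:ℝ)..1, h x) := rfl
  have EpEq : Ep = (1/2) * (∫ x in (-1:ℝ)..1, (deriv hp x)^2) + P * (∫ x in (-1:ℝ)..1, hp x) := rfl
  clear_value Eh Ep
  have huIcc : Set.uIcc (-1:ℝ) 1 = Set.Icc (-1) 1 := Set.uIcc_of_le (by norm_num)
  -- derivative of hp
  have hpd : ∀ x : ℝ, HasDerivAt hp (P * x) x := by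
    intro x
    have h0 := (((hasDerivAt_pow 2 x).sub_const 1).const_mul (P/2)).add_const 1
    exact h0.congr_deriv (by rw [show (2:ℕ)-1 = 1 from rfl]; push_cast; ring)
  have hpderiv : ∀ x : ℝ, deriv hp x = P * x := fun x => (hpd x).deriv
  -- HasDerivAt for h on the interior
  have hderiv' : ∀ x ∈ Set.Ioo (-1:ℝ) 1, HasDerivAt h (h' x) x := by
    intro x hx
    exact (hderiv x (Set.Ioo_subset_Icc_self hx)).hasDerivAt
      (mem_nhds_iff.2 ⟨Set.Ioo (-1) 1, Set.Ioo_subset_Icc_self, isOpen_Ioo, hx⟩)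
  -- integrability of h'
  have h'meas : AEStronglyMeasurable h' (volume.restrict (Set.Ioc (-1:ℝ) 1)) := by
    refine ((measurable_deriv h).aestronglyMeasurable.restrict).congr ?_
    have h01 : (volume.restrict (Set.Ioc (-1:ℝ) 1)) (Set.Ioc (-1:ℝ) 1 \ Set.Ioo (-1) 1) = 0 := by
      have hsub : Set.Ioc (-1:ℝ) 1 \ Set.Ioo (-1) 1 ⊆ {1} := by
        intro x hx
        rcases hx with ⟨⟨h1, h2⟩, h3⟩
        simp only [Set.mem_Ioo, not_and, not_lt] at h3
        simp [le_antisymm h2 (h3 h1)]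
      exact measure_mono_null hsub (by simp)
    filter_upwards [ae_restrict_mem measurableSet_Ioc,
      (measure_eq_zero_iff_ae_notMem.mp h01)] with x hx hx2
    have hxo : x ∈ Set.Ioo (-1:ℝ) 1 := by
      by_contra hc; exact hx2 ⟨hx, hc⟩
    exact (hderiv' x hxo).deriv
  have h'int : IntervalIntegrable h' volume (-1) 1 := by
    rw [intervalIntegrable_iff_integrableOn_Ioc_of_le (by norm_num)]
    have hbnd : Integrable (fun x => (1 + (h' x)^2)/2) (volume.restrict (Set.Ioc (-1:ℝ) 1)) := by
      have h2 : IntegrableOn (fun x => (h' x)^2) (Set.Ioc (-1:ℝ) 1) volume :=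
        (intervalIntegrable_iff_integrableOn_Ioc_of_le (by norm_num)).mp hint
      exact ((integrable_const 1).add h2).div_const 2
    refine hbnd.mono' h'meas ?_
    filter_upwards with x
    have hs : (|h' x| - 1)^2 ≥ 0 := sq_nonneg _
    rw [Real.norm_eq_abs]
    nlinarith [sq_abs (h' x)]
  have hxh'int : IntervalIntegrable (fun x => x * h' x) volume (-1) 1 :=
    h'int.continuousOn_mul (continuous_id.continuousOn)
  have hhint : IntervalIntegrable h volume (-1) 1 := by
    apply ContinuousOn.intervalIntegrable; rwa [huIcc]
  -- integration by parts: ∫ (h + x h') = 2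
  have ibp : (∫ x in (-1:ℝ)..1, (h x + x * h' x)) = 2 := by
    have H := intervalIntegral.integral_eq_sub_of_hasDeriv_right_of_le (f := fun x => x * h x)
      (f' := fun x => h x + x * h' x) (by norm_num : (-1:ℝ) ≤ 1)
      (continuousOn_id.mul hcont)
      (fun x hx => by
        have := ((hasDerivAt_id' x).mul (hderiv' x hx))
        exact this.hasDerivWithinAt.congr_deriv (by ring))
      (hhint.add hxh'int)
    rw [show (2:ℝ) = 1 + 1 by norm_num]
    simpa [hbcm, hbcp] using H
  have hxh' : (∫ x in (-1:ℝ)..1, x * h' x) = 2 - (∫ x in (-1:ℝ)..1, h x) := by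
    rw [intervalIntegral.integral_add hhint hxh'int] at ibp
    linarith
  -- simple integrals
  have hx2 : (∫ x in (-1:ℝ)..1, x^2) = 2/3 := by
    rw [integral_pow]; norm_num
  have hhp : (∫ x in (-1:ℝ)..1, hp x) = 2 - 2*P/3 := by
    have e : (∫ x in (-1:ℝ)..1, hp x)
        = (∫ x in (-1:ℝ)..1, (P/2 * x^2 + (1 - P/2))) := by
      apply intervalIntegral.integral_congr; intro x _; simp only [hp]; ring
    rw [e, intervalIntegral.integral_add (f := fun x => P/2 * x^2) (g := fun _ => 1 - P/2)
        ((continuous_const.mul (continuous_pow 2)).intervalIntegrable _ _)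
        intervalIntegrable_const,
      intervalIntegral.integral_const_mul, hx2, intervalIntegral.integral_const]
    simp; ring
  have hEp : Ep = 2*P - P^2/3 := by
    have h1 : (∫ x in (-1:ℝ)..1, (deriv hp x)^2) = P^2 * (2/3) := by
      have e : (∫ x in (-1:ℝ)..1, (deriv hp x)^2) = (∫ x in (-1:ℝ)..1, P^2 * x^2) := by
        apply intervalIntegral.integral_congr; intro x _
        simp only [hpderiv]; ring
      rw [e, intervalIntegral.integral_const_mul, hx2]
    rw [EpEq, h1, hhp]; ring
  -- the key identity
  have hsq_int : IntervalIntegrable (fun x => (h' x - P*x)^2) volume (-1) 1 := by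
    have e : (fun x => (h' x - P*x)^2)
        = fun x => ((h' x)^2 - (2*P) * (x * h' x)) + P^2 * x^2 := by
      funext x; ring
    rw [e]
    exact ((hint.sub (hxh'int.const_mul (2*P))).add
      (((continuous_const.mul (continuous_pow 2)).intervalIntegrable _ _)))
  have hsq_val : (∫ x in (-1:ℝ)..1, (h' x - P*x)^2)
      = (∫ x in (-1:ℝ)..1, (h' x)^2) - 2*P*(2 - (∫ x in (-1:ℝ)..1, h x)) + P^2 * (2/3) := by
    have e1 : (∫ x in (-1:ℝ)..1, (h' x - P*x)^2)
        = (∫ x in (-1:ℝ)..1, (((h' x)^2 - (2*P) * (x * h' x)) + P^2 * x^2)) := by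
      apply intervalIntegral.integral_congr; intro x _; simp only; ring
    rw [e1, intervalIntegral.integral_add (g := fun x => P^2 * x^2) (hint.sub (hxh'int.const_mul (2*P)))
        ((continuous_const.mul (continuous_pow 2)).intervalIntegrable _ _),
      intervalIntegral.integral_sub hint (hxh'int.const_mul (2*P)),
      intervalIntegral.integral_const_mul, intervalIntegral.integral_const_mul, hx2, hxh']
  have key : Eh - Ep = (1/2) * (∫ x in (-1:ℝ)..1, (h' x - P*x)^2) := by
    rw [hsq_val, hEp, EhEq]; ring
  have hnonneg : 0 ≤ (∫ x in (-1:ℝ)..1, (h' x - P*x)^2) :=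
    intervalIntegral.integral_nonneg (by norm_num) (fun x _ => sq_nonneg _)
  constructor
  · linarith
  constructor
  · -- equality implies h = hp
    intro heq
    have hz : (∫ x in (-1:ℝ)..1, (h' x - P*x)^2) = 0 := by linarith
    rw [intervalIntegral.integral_of_le (by norm_num : (-1:ℝ) ≤ 1)] at hz
    have hintR : Integrable (fun x => (h' x - P*x)^2) (volume.restrict (Set.Ioc (-1:ℝ) 1)) :=
      (intervalIntegrable_iff_integrableOn_Ioc_of_le (by norm_num)).mp hsq_int
    have hae : (fun x => (h' x - P*x)^2) =ᵐ[volume.restrict (Set.Ioc (-1:ℝ) 1)] 0 :=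
      (integral_eq_zero_iff_of_nonneg (fun x => sq_nonneg _) hintR).mp hz
    have hae' : ∀ᵐ x ∂(volume.restrict (Set.Ioc (-1:ℝ) 1)), h' x = P * x := by
      filter_upwards [hae] with x hx
      have h1 : (h' x - P*x)^2 = 0 := hx
      have h2 := pow_eq_zero_iff (n := 2) (by norm_num) |>.mp h1
      linarith
    intro x hx
    rcases hx with ⟨hx1, hx2⟩
    have ftc : (∫ t in (-1:ℝ)..x, h' t) = h x - h (-1) := by
      apply intervalIntegral.integral_eq_sub_of_hasDeriv_right_of_le hx1
      · exact hcont.mono (Set.Icc_subset_Icc (le_refl _) hx2)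
      · intro t ht
        exact (hderiv' t ⟨ht.1, lt_of_lt_of_le ht.2 hx2⟩).hasDerivWithinAt
      · exact h'int.mono_set (by rw [huIcc, Set.uIcc_of_le hx1]; exact Set.Icc_subset_Icc le_rfl hx2)
    have hcongr : (∫ t in (-1:ℝ)..x, h' t) = (∫ t in (-1:ℝ)..x, P * t) := by
      rw [intervalIntegral.integral_of_le hx1, intervalIntegral.integral_of_le hx1]
      apply integral_congr_ae
      exact ae_restrict_of_ae_restrict_of_subset (Set.Ioc_subset_Ioc le_rfl hx2) hae'
    have hPt : (∫ t in (-1:ℝ)..x, P * t) = P/2 * (x^2 - 1) := by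
      rw [intervalIntegral.integral_const_mul, integral_id]; ring
    have hfin : h x = P/2 * (x^2 - 1) + 1 := by
      rw [hbcm] at ftc; linarith [ftc ▸ (hcongr.trans hPt)]
    simpa [hp] using hfin
  · -- h = hp implies equality
    intro heq
    have hud : UniqueDiffOn ℝ (Set.Icc (-1:ℝ) 1) := uniqueDiffOn_Icc (by norm_num)
    have h'eq : ∀ x ∈ Set.Icc (-1:ℝ) 1, h' x = P * x := by
      intro x hx
      have d1 : HasDerivWithinAt hp (h' x) (Set.Icc (-1) 1) x :=
        (hderiv x hx).congr (fun y hy => (heq hy).symm) (heq hx).symm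
      have d2 : HasDerivWithinAt hp (P * x) (Set.Icc (-1) 1) x :=
        (hpd x).hasDerivWithinAt
      rw [← d1.derivWithin (hud x hx), ← d2.derivWithin (hud x hx)]
    have hz : (∫ t in (-1:ℝ)..1, (h' t - P*t)^2) = 0 := by
      have e : (∫ t in (-1:ℝ)..1, (h' t - P*t)^2) = (∫ t in (-1:ℝ)..1, (0:ℝ)) := by
        apply intervalIntegral.integral_congr
        intro t ht
        rw [huIcc] at ht
        simp [h'eq t ht]
      simp [e]
    linarith
end

section
/- Let P > 2, x_P = 1 - sqrt(2/P), and h_P the steady state equal to (P/2)(|x|-x_P)^2 for x_P ≤ |x| ≤ 1 and 0 for |x| < x_P. For every nonnegative h ∈ H^1((-1,1)) with h(±1) = 1, the energy E(h) = (1/2)∫|h'|^2 + P∫h satisfies E(h) ≥ E(h_P), with equality if and only if h = h_P. -/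
open MeasureTheory

private lemma maxsq_hasDerivAt (a x : ℝ) :
    HasDerivAt (fun y => max (y - a) 0 ^ 2) (2 * max (x - a) 0) x := by
  rcases lt_trichotomy x a with hxa | rfl | hxa
  · have hev : (fun y : ℝ => max (y - a) 0 ^ 2) =ᶠ[nhds x] fun _ => (0:ℝ) := by
      filter_upwards [Iio_mem_nhds hxa] with y hy
      rw [max_eq_right (by simp only [Set.mem_Iio] at hy; linarith)]
      norm_num
    have h0 := (hasDerivAt_const x (0:ℝ)).congr_of_eventuallyEq hev
    have : (2 : ℝ) * max (x - a) 0 = 0 := by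
      rw [max_eq_right (by linarith)]; ring
    rw [this]; exact h0
  · have hgoal : (fun y : ℝ => max (y - x) 0 ^ 2) =o[nhds x] fun y => y - x := by
      have h2 : Filter.Tendsto (fun y : ℝ => y - x) (nhds x) (nhds 0) := by
        have := Filter.Tendsto.sub_const (Filter.tendsto_id (x := nhds x)) x
        rwa [sub_self] at this
      have h1 : (fun y : ℝ => (y - x) * (y - x)) =o[nhds x] fun y => y - x := by
        simpa using ((Asymptotics.isLittleO_one_iff ℝ).2 h2).mul_isBigO
          (Asymptotics.isBigO_refl (fun y : ℝ => y - x) (nhds x))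
      refine (Asymptotics.isBigO_of_le _ fun y => ?_).trans_isLittleO h1
      rw [Real.norm_eq_abs, Real.norm_eq_abs, abs_of_nonneg (by positivity),
        abs_of_nonneg (mul_self_nonneg _)]
      rcases le_total (y - x) 0 with hy | hy
      · rw [max_eq_right hy]; nlinarith
      · rw [max_eq_left hy]; nlinarith
    rw [hasDerivAt_iff_isLittleO]
    simpa using hgoal
  · have hev : (fun y : ℝ => max (y - a) 0 ^ 2) =ᶠ[nhds x] fun y => (y - a) ^ 2 := by
      filter_upwards [Ioi_mem_nhds hxa] with y hy
      rw [max_eq_left (by simp only [Set.mem_Ioi] at hy; linarith)]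
    have hd : HasDerivAt (fun y : ℝ => (y - a) ^ 2) (2 * (x - a)) x := by
      have := ((hasDerivAt_id x).sub_const a).fun_pow 2
      simpa using this
    have h0 := hd.congr_of_eventuallyEq hev
    rwa [max_eq_left (by linarith)]

theorem stmt4 (P : ℝ) (hP : 2 < P) (h h' : ℝ → ℝ)
    (hcont : ContinuousOn h (Set.Icc (-1) 1))
    (hderiv : ∀ x ∈ Set.Icc (-1:ℝ) 1, HasDerivWithinAt h (h' x) (Set.Icc (-1) 1) x)
    (hint : IntervalIntegrable (fun x => (h' x)^2) volume (-1) 1)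
    (hnn : ∀ x ∈ Set.Icc (-1:ℝ) 1, 0 ≤ h x)
    (hbcm : h (-1) = 1) (hbcp : h 1 = 1) :
    let xP : ℝ := 1 - Real.sqrt (2/P)
    let hp : ℝ → ℝ := fun x => P/2 * (max (|x| - xP) 0)^2
    let Eh : ℝ := (1/2) * (∫ x in (-1:ℝ)..1, (h' x)^2) + P * (∫ x in (-1:ℝ)..1, h x)
    let Ep : ℝ := (1/2) * (∫ x in (-1:ℝ)..1, (deriv hp x)^2) + P * (∫ x in (-1:ℝ)..1, hp x)
    Ep ≤ Eh ∧ (Eh = Ep ↔ Set.EqOn h hp (Set.Icc (-1) 1)) := by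
  intro xP hp Eh Ep
  have hP0 : (0:ℝ) < P := by linarith
  have h2P : (0:ℝ) < 2 / P := by positivity
  have hslt : Real.sqrt (2/P) < 1 := by
    rw [Real.sqrt_lt' one_pos]
    rw [one_pow, div_lt_one hP0]; exact hP
  have hspos : 0 < Real.sqrt (2/P) := Real.sqrt_pos.2 h2P
  have hsq : Real.sqrt (2/P) ^ 2 = 2 / P := Real.sq_sqrt h2P.le
  have hxP0 : 0 < xP := by simp only [xP]; linarith
  have hxP1 : xP < 1 := by simp only [xP]; linarith
  -- the derivative of hp
  set q : ℝ → ℝ := fun x => P * (max (x - xP) 0 - max (-x - xP) 0) with hq_def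
  have hq_cont : Continuous q := by
    apply continuous_const.mul
    exact ((continuous_id.sub continuous_const).max continuous_const).sub
      (((continuous_neg).sub continuous_const).max continuous_const)
  have hp_eq : ∀ x : ℝ, hp x = P/2 * (max (x - xP) 0 ^ 2 + max (-x - xP) 0 ^ 2) := by
    intro x
    show P/2 * (max (|x| - xP) 0)^2 = _
    rcases le_total 0 x with hx | hx
    · rw [abs_of_nonneg hx, max_eq_right (a := -x - xP) (by linarith)]
      ring
    · rw [abs_of_nonpos hx, max_eq_right (a := x - xP) (by linarith)]
      ring
  have hq_deriv : ∀ x : ℝ, HasDerivAt hp (q x) x := by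
    intro x
    have d1 := maxsq_hasDerivAt xP x
    have d2 : HasDerivAt (fun y : ℝ => max (-y - xP) 0 ^ 2) (-(2 * max (-x - xP) 0)) x := by
      have hneg : HasDerivAt (fun y : ℝ => -y) (-1 : ℝ) x := hasDerivAt_neg' x
      have := (maxsq_hasDerivAt xP (-x)).comp x hneg
      exact this.congr_deriv (by ring)
    have hsum := ((d1.add d2).const_mul (P/2))
    have : HasDerivAt hp (P/2 * (2 * max (x - xP) 0 + -(2 * max (-x - xP) 0))) x := by
      apply hsum.congr_of_eventuallyEq
      exact Filter.Eventually.of_forall fun y => hp_eq y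
    convert this using 1
    simp only [hq_def]; ring
  have hderiv_hp : deriv hp = q := funext fun x => (hq_deriv x).deriv
  have hp_cont : Continuous hp := by
    show Continuous fun x : ℝ => P/2 * (max (|x| - xP) 0)^2
    exact (continuous_const.mul (((continuous_abs.sub continuous_const).max continuous_const).pow 2))
  -- boundary values of hp, and vanishing
  have hp1 : hp 1 = 1 := by
    show P/2 * (max (|1| - xP) 0)^2 = 1
    rw [abs_one, show (1:ℝ) - xP = Real.sqrt (2/P) by simp [xP],
      max_eq_left hspos.le, hsq]
    field_simp
  have hpm1 : hp (-1) = 1 := by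
    show P/2 * (max (|(-1:ℝ)| - xP) 0)^2 = 1
    rw [abs_neg, abs_one, show (1:ℝ) - xP = Real.sqrt (2/P) by simp [xP],
      max_eq_left hspos.le, hsq]
    field_simp
  have hp_zero : ∀ x ∈ Set.Icc (-xP) xP, hp x = 0 := by
    intro x hx
    show P/2 * (max (|x| - xP) 0)^2 = 0
    rw [max_eq_right (by rw [sub_nonpos]; exact abs_le.2 ⟨hx.1, hx.2⟩)]
    ring
  have hq_zero : ∀ x ∈ Set.Icc (-xP) xP, q x = 0 := by
    intro x hx
    simp only [hq_def]
    rw [max_eq_right (by linarith [hx.2]), max_eq_right (by linarith [hx.1])]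
    ring
  have hIcc : Set.uIcc (-1:ℝ) 1 = Set.Icc (-1) 1 := Set.uIcc_of_le (by norm_num)
  have hIoc : Set.uIoc (-1:ℝ) 1 = Set.Ioc (-1) 1 := Set.uIoc_of_le (by norm_num)
  -- measurability of h'
  set H : ℝ → ℝ := fun x => h (max (-1) (min 1 x)) with hH_def
  have hH : ∀ x ∈ Set.Ioo (-1:ℝ) 1, deriv H x = h' x := by
    intro x hx
    have hx' : x ∈ Set.Icc (-1:ℝ) 1 := Set.Ioo_subset_Icc_self hx
    have hda : HasDerivAt h (h' x) x :=
      (hderiv x hx').hasDerivAt (Icc_mem_nhds hx.1 hx.2)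
    have hev : H =ᶠ[nhds x] h := by
      filter_upwards [Ioo_mem_nhds hx.1 hx.2] with y hy
      simp only [hH_def]
      rw [min_eq_right hy.2.le, max_eq_right hy.1.le]
    exact (hda.congr_of_eventuallyEq hev).deriv
  have hmeas : AEStronglyMeasurable h' (volume.restrict (Set.uIoc (-1:ℝ) 1)) := by
    rw [hIoc, ← Measure.restrict_congr_set Ioo_ae_eq_Ioc]
    apply ((measurable_deriv H).aestronglyMeasurable).congr
    filter_upwards [ae_restrict_mem measurableSet_Ioo] with x hx
    exact hH x hx
  -- integrability facts
  have hint_h : IntervalIntegrable h volume (-1) 1 :=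
    ContinuousOn.intervalIntegrable (by rwa [hIcc])
  have hint_hp : IntervalIntegrable hp volume (-1) 1 := hp_cont.intervalIntegrable _ _
  have hint_q : IntervalIntegrable q volume (-1) 1 := hq_cont.intervalIntegrable _ _
  have hint_q2 : IntervalIntegrable (fun x => q x ^ 2) volume (-1) 1 :=
    (hq_cont.pow 2).intervalIntegrable _ _
  have hint_h' : IntervalIntegrable h' volume (-1) 1 := by
    apply IntervalIntegrable.mono_fun ((intervalIntegrable_const (c := (1:ℝ))).add hint) hmeas
    apply Filter.Eventually.of_forall
    intro x
    simp only [Real.norm_eq_abs]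
    rw [abs_of_nonneg (by positivity : (0:ℝ) ≤ 1 + h' x ^ 2)]
    nlinarith [abs_nonneg (h' x), sq_abs (h' x)]
  have hint_h'q : IntervalIntegrable (fun x => h' x * q x) volume (-1) 1 := by
    apply IntervalIntegrable.mono_fun (hint.add hint_q2)
      (hmeas.mul (hq_cont.aestronglyMeasurable.restrict))
    apply Filter.Eventually.of_forall
    intro x
    simp only [Real.norm_eq_abs, Pi.mul_apply]
    rw [abs_of_nonneg (by positivity : (0:ℝ) ≤ h' x ^ 2 + q x ^ 2), abs_mul]
    nlinarith [abs_nonneg (h' x), abs_nonneg (q x), sq_abs (h' x), sq_abs (q x)]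
  have hint_g'q : IntervalIntegrable (fun x => (h' x - q x) * q x) volume (-1) 1 := by
    have : (fun x => (h' x - q x) * q x) = fun x => h' x * q x - q x ^ 2 := by
      funext x; ring
    rw [this]; exact hint_h'q.sub hint_q2
  have hint_g : IntervalIntegrable (fun x => h x - hp x) volume (-1) 1 := hint_h.sub hint_hp
  have hint_g'sq : IntervalIntegrable (fun x => (h' x - q x) ^ 2) volume (-1) 1 := by
    have : (fun x => (h' x - q x) ^ 2)
        = fun x => h' x ^ 2 - 2 * (h' x * q x) + q x ^ 2 := by
      funext x; ring
    rw [this]; exact (hint.sub (hint_h'q.const_mul 2)).add hint_q2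
  have hsub_r : Set.uIcc xP (1:ℝ) ⊆ Set.uIcc (-1:ℝ) 1 := by
    rw [hIcc, Set.uIcc_of_le hxP1.le]
    exact Set.Icc_subset_Icc (by linarith) le_rfl
  have hsub_l : Set.uIcc (-1:ℝ) (-xP) ⊆ Set.uIcc (-1:ℝ) 1 := by
    rw [hIcc, Set.uIcc_of_le (by linarith : (-1:ℝ) ≤ -xP)]
    exact Set.Icc_subset_Icc le_rfl (by linarith)
  have hsub_m : Set.uIcc (-xP) xP ⊆ Set.uIcc (-1:ℝ) 1 := by
    rw [hIcc, Set.uIcc_of_le (by linarith : -xP ≤ xP)]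
    exact Set.Icc_subset_Icc (by linarith) (by linarith)
  -- derivative of g := h - hp at interior points
  have hg_deriv : ∀ x ∈ Set.Ioo (-1:ℝ) 1,
      HasDerivAt (fun y => h y - hp y) (h' x - q x) x := by
    intro x hx
    exact ((hderiv x (Set.Ioo_subset_Icc_self hx)).hasDerivAt
      (Icc_mem_nhds hx.1 hx.2)).sub (hq_deriv x)
  have hg_cont : ContinuousOn (fun y => h y - hp y) (Set.Icc (-1:ℝ) 1) :=
    hcont.sub hp_cont.continuousOn
  -- integration by parts on the right interval
  have key_right : ∫ x in xP..1, ((h' x - q x) * q x + P * (h x - hp x)) = 0 := by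
    have hF : ∀ x ∈ Set.Ioo xP (1:ℝ), HasDerivWithinAt (fun y => (h y - hp y) * q y)
        ((h' x - q x) * q x + P * (h x - hp x)) (Set.Ioi x) x := by
      intro x hx
      have hx' : x ∈ Set.Ioo (-1:ℝ) 1 := ⟨by linarith [hx.1], hx.2⟩
      have hqx : HasDerivAt q P x := by
        have hlin : HasDerivAt (fun y : ℝ => P * (y - xP)) P x := by
          simpa using ((hasDerivAt_id x).sub_const xP).const_mul P
        apply hlin.congr_of_eventuallyEq
        filter_upwards [Ioo_mem_nhds hx.1 hx.2] with y hy
        simp only [hq_def]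
        rw [max_eq_left (by linarith [hy.1]), max_eq_right (by linarith [hy.1] : -y - xP ≤ 0)]
        ring
      have := (hg_deriv x hx').mul hqx
      have h2 : (h' x - q x) * q x + (h x - hp x) * P
          = (h' x - q x) * q x + P * (h x - hp x) := by ring
      rw [h2] at this
      exact this.hasDerivWithinAt
    have hFcont : ContinuousOn (fun y => (h y - hp y) * q y) (Set.Icc xP 1) :=
      (hg_cont.mono (Set.Icc_subset_Icc (by linarith) le_rfl)).mul hq_cont.continuousOn
    have hFi : IntervalIntegrable (fun x => (h' x - q x) * q x + P * (h x - hp x))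
        volume xP 1 :=
      (hint_g'q.add (hint_g.const_mul P)).mono_set hsub_r
    have := intervalIntegral.integral_eq_sub_of_hasDeriv_right_of_le hxP1.le hFcont hF hFi
    rw [this]
    have hq1 : q xP = 0 := hq_zero xP ⟨by linarith, le_rfl⟩
    rw [hbcp, hp1, hq1]
    ring
  -- integration by parts on the left interval
  have key_left : ∫ x in (-1:ℝ)..(-xP), ((h' x - q x) * q x + P * (h x - hp x)) = 0 := by
    have hF : ∀ x ∈ Set.Ioo (-1:ℝ) (-xP), HasDerivWithinAt (fun y => (h y - hp y) * q y)
        ((h' x - q x) * q x + P * (h x - hp x)) (Set.Ioi x) x := by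
      intro x hx
      have hx' : x ∈ Set.Ioo (-1:ℝ) 1 := ⟨hx.1, by linarith [hx.2]⟩
      have hqx : HasDerivAt q P x := by
        have hlin : HasDerivAt (fun y : ℝ => P * (y + xP)) P x := by
          simpa using ((hasDerivAt_id x).add_const xP).const_mul P
        apply hlin.congr_of_eventuallyEq
        filter_upwards [Ioo_mem_nhds hx.1 hx.2] with y hy
        simp only [hq_def]
        rw [max_eq_right (by linarith [hy.2] : y - xP ≤ 0),
          max_eq_left (by linarith [hy.2] : (0:ℝ) ≤ -y - xP)]
        ring
      have := (hg_deriv x hx').mul hqx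
      have h2 : (h' x - q x) * q x + (h x - hp x) * P
          = (h' x - q x) * q x + P * (h x - hp x) := by ring
      rw [h2] at this
      exact this.hasDerivWithinAt
    have hFcont : ContinuousOn (fun y => (h y - hp y) * q y) (Set.Icc (-1) (-xP)) :=
      (hg_cont.mono (Set.Icc_subset_Icc le_rfl (by linarith))).mul hq_cont.continuousOn
    have hFi : IntervalIntegrable (fun x => (h' x - q x) * q x + P * (h x - hp x))
        volume (-1) (-xP) :=
      (hint_g'q.add (hint_g.const_mul P)).mono_set hsub_l
    have := intervalIntegral.integral_eq_sub_of_hasDeriv_right_of_le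
      (by linarith : (-1:ℝ) ≤ -xP) hFcont hF hFi
    rw [this]
    have hq1 : q (-xP) = 0 := hq_zero (-xP) ⟨le_rfl, by linarith⟩
    rw [hbcm, hpm1, hq1]
    ring
  -- middle interval: integrand vanishes
  have key_mid : ∫ x in (-xP)..xP, (h' x - q x) * q x = 0 := by
    rw [intervalIntegral.integral_congr (g := fun _ => (0:ℝ))
      (fun x hx => by
        rw [Set.uIcc_of_le (by linarith : -xP ≤ xP)] at hx
        rw [hq_zero x hx]; ring)]
    simp
  have key_mid_hp : ∫ x in (-xP)..xP, hp x = 0 := by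
    rw [intervalIntegral.integral_congr (g := fun _ => (0:ℝ))
      (fun x hx => by
        rw [Set.uIcc_of_le (by linarith : -xP ≤ xP)] at hx
        exact hp_zero x hx)]
    simp
  -- splitting the integrals
  have hsplit_g'q : ∫ x in (-1:ℝ)..1, (h' x - q x) * q x
      = (∫ x in (-1:ℝ)..(-xP), (h' x - q x) * q x) + (∫ x in (-xP)..xP, (h' x - q x) * q x)
        + ∫ x in xP..1, (h' x - q x) * q x := by
    rw [← intervalIntegral.integral_add_adjacent_intervals (b := -xP)
        (hint_g'q.mono_set hsub_l) (hint_g'q.mono_set (by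
          rw [hIcc, Set.uIcc_of_le (by linarith : -xP ≤ (1:ℝ))]
          exact Set.Icc_subset_Icc (by linarith) le_rfl)),
      ← intervalIntegral.integral_add_adjacent_intervals (a := -xP) (b := xP)
        (hint_g'q.mono_set hsub_m) (hint_g'q.mono_set hsub_r)]
    ring
  have hsplit_g : ∫ x in (-1:ℝ)..1, (h x - hp x)
      = (∫ x in (-1:ℝ)..(-xP), (h x - hp x)) + (∫ x in (-xP)..xP, (h x - hp x))
        + ∫ x in xP..1, (h x - hp x) := by
    rw [← intervalIntegral.integral_add_adjacent_intervals (b := -xP)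
        (hint_g.mono_set hsub_l) (hint_g.mono_set (by
          rw [hIcc, Set.uIcc_of_le (by linarith : -xP ≤ (1:ℝ))]
          exact Set.Icc_subset_Icc (by linarith) le_rfl)),
      ← intervalIntegral.integral_add_adjacent_intervals (a := -xP) (b := xP)
        (hint_g.mono_set hsub_m) (hint_g.mono_set hsub_r)]
    ring
  -- basic integral identities on the full interval
  have exp_sq : ∫ x in (-1:ℝ)..1, (h' x - q x) ^ 2
      = (∫ x in (-1:ℝ)..1, (h' x)^2) - 2 * (∫ x in (-1:ℝ)..1, h' x * q x)
        + ∫ x in (-1:ℝ)..1, q x ^ 2 := by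
    have e : (fun x => (h' x - q x) ^ 2)
        = fun x => h' x ^ 2 - 2 * (h' x * q x) + q x ^ 2 := by funext x; ring
    rw [e, intervalIntegral.integral_add (hint.sub (hint_h'q.const_mul 2)) hint_q2,
      intervalIntegral.integral_sub hint (hint_h'q.const_mul 2),
      intervalIntegral.integral_const_mul]
  have exp_g'q : ∫ x in (-1:ℝ)..1, (h' x - q x) * q x
      = (∫ x in (-1:ℝ)..1, h' x * q x) - ∫ x in (-1:ℝ)..1, q x ^ 2 := by
    have e : (fun x => (h' x - q x) * q x) = fun x => h' x * q x - q x ^ 2 := by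
      funext x; ring
    rw [e, intervalIntegral.integral_sub hint_h'q hint_q2]
  -- right and left values
  have val_right : ∫ x in xP..1, (h' x - q x) * q x = -(P * ∫ x in xP..1, (h x - hp x)) := by
    have := intervalIntegral.integral_add (hint_g'q.mono_set hsub_r)
      ((hint_g.const_mul P).mono_set hsub_r)
    rw [key_right] at this
    rw [← intervalIntegral.integral_const_mul]
    linarith [this]
  have val_left : ∫ x in (-1:ℝ)..(-xP), (h' x - q x) * q x
      = -(P * ∫ x in (-1:ℝ)..(-xP), (h x - hp x)) := by
    have := intervalIntegral.integral_add (hint_g'q.mono_set hsub_l)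
      ((hint_g.const_mul P).mono_set hsub_l)
    rw [key_left] at this
    rw [← intervalIntegral.integral_const_mul]
    linarith [this]
  -- the middle g integral equals the middle h integral
  have val_mid_g : ∫ x in (-xP)..xP, (h x - hp x) = ∫ x in (-xP)..xP, h x := by
    rw [intervalIntegral.integral_sub (hint_h.mono_set hsub_m) (hint_hp.mono_set hsub_m),
      key_mid_hp]
    ring
  have hg_int_full : ∫ x in (-1:ℝ)..1, (h x - hp x)
      = (∫ x in (-1:ℝ)..1, h x) - ∫ x in (-1:ℝ)..1, hp x :=
    intervalIntegral.integral_sub hint_h hint_hp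
  -- the key energy identity
  set Ig : ℝ := ∫ x in (-1:ℝ)..1, (h' x - q x) ^ 2 with hIg_def
  set Mh : ℝ := ∫ x in (-xP)..xP, h x with hMh_def
  have hEh_eq : Eh = (1/2) * (∫ x in (-1:ℝ)..1, (h' x)^2) + P * (∫ x in (-1:ℝ)..1, h x) := rfl
  have hEp_eq : Ep = (1/2) * (∫ x in (-1:ℝ)..1, q x ^ 2) + P * (∫ x in (-1:ℝ)..1, hp x) := by
    show (1/2) * (∫ x in (-1:ℝ)..1, (deriv hp x)^2) + P * (∫ x in (-1:ℝ)..1, hp x) = _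
    rw [hderiv_hp]
  clear_value Eh Ep
  have key : Eh - Ep = (1/2) * Ig + P * Mh := by
    rw [hEh_eq, hEp_eq]
    have h1 := hsplit_g'q
    rw [key_mid, val_right, val_left, exp_g'q] at h1
    have h3 : P * (∫ x in (-1:ℝ)..1, (h x - hp x))
        = P * (∫ x in (-1:ℝ)..(-xP), (h x - hp x)) + P * Mh
          + P * (∫ x in xP..1, (h x - hp x)) := by
      rw [hsplit_g, val_mid_g]; ring
    have h4 : P * (∫ x in (-1:ℝ)..1, (h x - hp x))
        = P * (∫ x in (-1:ℝ)..1, h x) - P * (∫ x in (-1:ℝ)..1, hp x) := by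
      rw [hg_int_full]; ring
    rw [hIg_def] at exp_sq
    linarith [exp_sq, h1, h3, h4]
  have hIg_nonneg : 0 ≤ Ig :=
    intervalIntegral.integral_nonneg (by norm_num) (fun x _ => sq_nonneg _)
  have hMh_nonneg : 0 ≤ Mh :=
    intervalIntegral.integral_nonneg (by linarith) (fun x hx =>
      hnn x ⟨by linarith [hx.1], by linarith [hx.2]⟩)
  have hPMh : 0 ≤ P * Mh := mul_nonneg hP0.le hMh_nonneg
  clear_value Ig Mh
  constructor
  · linarith [key, hIg_nonneg, hPMh]
  constructor
  · -- equality implies h = hp on Icc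
    intro heq
    have hIg0 : Ig = 0 := by linarith [key, hIg_nonneg, hPMh]
    have hae : (fun x => h' x - q x) =ᵐ[volume.restrict (Set.Ioc (-1:ℝ) 1)] 0 := by
      have h0 : (fun x => (h' x - q x) ^ 2) =ᵐ[volume.restrict (Set.Ioc (-1:ℝ) 1)] 0 := by
        refine (intervalIntegral.integral_eq_zero_iff_of_le_of_nonneg_ae (by norm_num)
          (Filter.Eventually.of_forall fun x => sq_nonneg _) hint_g'sq).1 ?_
        rw [← hIg_def]; exact hIg0
      filter_upwards [h0] with x hx
      have : (h' x - q x) ^ 2 = 0 := hx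
      have := pow_eq_zero_iff (n := 2) (by norm_num) |>.1 this
      simpa using this
    intro x hx
    have hx1 : (-1:ℝ) ≤ x := hx.1
    have hx2 : x ≤ 1 := hx.2
    have hFTC : ∫ t in (-1:ℝ)..x, (h' t - q t) = (h x - hp x) - (h (-1) - hp (-1)) := by
      apply intervalIntegral.integral_eq_sub_of_hasDeriv_right_of_le hx1
        (hg_cont.mono (Set.Icc_subset_Icc le_rfl hx2))
        (fun t ht => (hg_deriv t ⟨ht.1, by linarith [ht.2]⟩).hasDerivWithinAt)
      exact (hint_h'.sub hint_q).mono_set (by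
        rw [hIcc, Set.uIcc_of_le hx1]
        exact Set.Icc_subset_Icc le_rfl hx2)
    have hzero : ∫ t in (-1:ℝ)..x, (h' t - q t) = 0 := by
      rw [intervalIntegral.integral_of_le hx1]
      apply integral_eq_zero_of_ae
      exact ae_restrict_of_ae_restrict_of_subset (Set.Ioc_subset_Ioc le_rfl hx2) hae
    rw [hzero] at hFTC
    rw [hbcm, hpm1] at hFTC
    have : h x = hp x := by linarith [hFTC]
    exact this
  · -- h = hp on Icc implies equality of energies
    intro heq
    have h'eq : ∀ x ∈ Set.Icc (-1:ℝ) 1, h' x = q x := by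
      intro x hx
      have hud : UniqueDiffWithinAt ℝ (Set.Icc (-1:ℝ) 1) x :=
        uniqueDiffOn_Icc (by norm_num) x hx
      have h1 : HasDerivWithinAt h (q x) (Set.Icc (-1:ℝ) 1) x :=
        ((hq_deriv x).hasDerivWithinAt).congr (fun y hy => heq hy) (heq hx)
      exact ((hderiv x hx).derivWithin hud).symm.trans (h1.derivWithin hud)
    have e1 : ∫ x in (-1:ℝ)..1, (h' x)^2 = ∫ x in (-1:ℝ)..1, q x ^ 2 := by
      apply intervalIntegral.integral_congr
      intro x hx
      rw [hIcc] at hx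
      simp only [h'eq x hx]
    have e2 : ∫ x in (-1:ℝ)..1, h x = ∫ x in (-1:ℝ)..1, hp x := by
      apply intervalIntegral.integral_congr
      intro x hx
      rw [hIcc] at hx
      exact heq hx
    rw [hEh_eq, hEp_eq, e1, e2]
end

section
/- Let k ∈ C^2 on J = (x_0, x_0+δ) ⊂ (-1,1) with k > 0 on J, k, k', k'' right-continuous at x_0, k(x_0^+) = 0 and k'(x_0^+) ≠ 0. Let (k_n) be nonnegative H^3((-1,1)) functions with k_n(±1) = c > 0 and k_n → k in C^2 on J. Then the energy dissipation ∫_{-1}^{1} k_n |∂_x^3 k_n|^2 dx does not converge to 0. -/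
open MeasureTheory Set Filter

lemma itd2eq (f : ℝ → ℝ) : iteratedDeriv 2 f = deriv (deriv f) := by
  rw [show (2:ℕ) = 1 + 1 from rfl, iteratedDeriv_succ, iteratedDeriv_one]

lemma itd3eq (f : ℝ → ℝ) : iteratedDeriv 3 f = deriv (iteratedDeriv 2 f) := by
  rw [show (3:ℕ) = 2 + 1 from rfl, iteratedDeriv_succ]

lemma secondDeriv_nonneg_of_isLocalMin {f : ℝ → ℝ} {a : ℝ}
    (hf : ContDiff ℝ 3 f) (hmin : IsLocalMin f a) : 0 ≤ iteratedDeriv 2 f a := by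
  by_contra hneg
  push_neg at hneg
  have hd1d : Differentiable ℝ (deriv f) := by
    rw [← iteratedDeriv_one]
    exact hf.differentiable_iteratedDeriv 1 (by norm_num)
  have hDa : HasDerivAt (deriv f) (iteratedDeriv 2 f a) a := by
    rw [itd2eq]; exact (hd1d a).hasDerivAt
  have hz : deriv f a = 0 := hmin.deriv_eq_zero
  have hs : Tendsto (slope (deriv f) a) (nhdsWithin a {a}ᶜ) (nhds (iteratedDeriv 2 f a)) :=
    hasDerivAt_iff_tendsto_slope.1 hDa
  have hs' : Tendsto (slope (deriv f) a) (nhdsWithin a (Set.Ioi a)) (nhds (iteratedDeriv 2 f a)) :=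
    hs.mono_left (nhdsWithin_mono a (fun x hx => ne_of_gt hx))
  have h1 : ∀ᶠ x in nhdsWithin a (Set.Ioi a), slope (deriv f) a x < iteratedDeriv 2 f a / 2 :=
    hs'.eventually_lt_const (by linarith)
  have h2 : ∀ᶠ x in nhdsWithin a (Set.Ioi a), deriv f x < 0 := by
    filter_upwards [h1, self_mem_nhdsWithin] with x hx hx'
    have hxa : (0:ℝ) < x - a := sub_pos.2 hx'
    rw [slope_def_field, hz, sub_zero] at hx
    have := (div_lt_iff₀ hxa).1 hx
    nlinarith
  have h3 : ∀ᶠ x in nhdsWithin a (Set.Ioi a), f a ≤ f x :=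
    (hmin : ∀ᶠ x in nhds a, f a ≤ f x).filter_mono nhdsWithin_le_nhds
  obtain ⟨u, hu, hsub⟩ := mem_nhdsGT_iff_exists_Ioc_subset.1 (h2.and h3)
  have hanti : StrictAntiOn f (Set.Icc a u) := by
    apply strictAntiOn_of_deriv_neg (convex_Icc a u) (hf.continuous.continuousOn)
    intro x hx
    rw [interior_Icc] at hx
    exact (hsub ⟨hx.1, hx.2.le⟩).1
  have hfu : f u < f a :=
    hanti ⟨le_rfl, le_of_lt hu⟩ ⟨le_of_lt hu, le_rfl⟩ hu
  have : f a ≤ f u := (hsub ⟨hu, le_rfl⟩).2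
  linarith

set_option maxHeartbeats 1000000 in
theorem stmt12 (x0 δ c : ℝ) (hδ : 0 < δ) (hJ : Set.Ioo x0 (x0+δ) ⊆ Set.Ioo (-1:ℝ) 1)
    (k : ℝ → ℝ) (k1 k2 : ℝ)
    (hk : ContDiffOn ℝ 2 k (Set.Ioo x0 (x0+δ)))
    (hkpos : ∀ x ∈ Set.Ioo x0 (x0+δ), 0 < k x)
    (hk0 : Filter.Tendsto k (nhdsWithin x0 (Set.Ioi x0)) (nhds 0))
    (hk1 : Filter.Tendsto (deriv k) (nhdsWithin x0 (Set.Ioi x0)) (nhds k1))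
    (hk1ne : k1 ≠ 0)
    (hk2 : Filter.Tendsto (iteratedDeriv 2 k) (nhdsWithin x0 (Set.Ioi x0)) (nhds k2))
    (kn : ℕ → ℝ → ℝ) (hc : 0 < c)
    (hknreg : ∀ n, ContDiff ℝ 3 (kn n))
    (hknnn : ∀ n, ∀ x ∈ Set.Icc (-1:ℝ) 1, 0 ≤ kn n x)
    (hknbc : ∀ n, kn n (-1) = c ∧ kn n 1 = c)
    (hconv0 : TendstoUniformlyOn kn k Filter.atTop (Set.Ioo x0 (x0+δ)))
    (hconv1 : TendstoUniformlyOn (fun n => deriv (kn n)) (deriv k)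
      Filter.atTop (Set.Ioo x0 (x0+δ)))
    (hconv2 : TendstoUniformlyOn (fun n => iteratedDeriv 2 (kn n)) (iteratedDeriv 2 k)
      Filter.atTop (Set.Ioo x0 (x0+δ))) :
    ¬ Filter.Tendsto (fun n => ∫ x in (-1:ℝ)..1, kn n x * (iteratedDeriv 3 (kn n) x)^2)
        Filter.atTop (nhds 0) := by
  intro hD
  have hk1sq : 0 < k1^2 := by positivity
  -- x0 ≥ -1
  have hm1x0 : -1 ≤ x0 := by
    by_contra h
    push_neg at h
    have hy1 : x0 < (x0-1)/2 := by linarith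
    have hmem : min ((x0-1)/2) (x0+δ/2) ∈ Set.Ioo x0 (x0+δ) :=
      ⟨lt_min hy1 (by linarith), (min_le_right _ _).trans_lt (by linarith)⟩
    have h2 := (hJ hmem).1
    have h3 := min_le_left ((x0-1)/2) (x0+δ/2)
    linarith
  -- choose b
  have e1 : ∀ᶠ x in nhdsWithin x0 (Set.Ioi x0), x ∈ Set.Ioo x0 (x0+δ) := by
    have hIio : Set.Iio (x0+δ) ∈ nhdsWithin x0 (Set.Ioi x0) :=
      nhdsWithin_le_nhds (Iio_mem_nhds (by linarith))
    filter_upwards [self_mem_nhdsWithin, hIio] with x hx1 hx2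
    exact ⟨hx1, hx2⟩
  have hTk : Filter.Tendsto (fun x => k x * iteratedDeriv 2 k x - (deriv k x)^2/2)
      (nhdsWithin x0 (Set.Ioi x0)) (nhds (0 * k2 - k1^2/2)) :=
    (hk0.mul hk2).sub ((hk1.pow 2).div_const 2)
  have e2 : ∀ᶠ x in nhdsWithin x0 (Set.Ioi x0),
      k x * iteratedDeriv 2 k x - (deriv k x)^2/2 < -k1^2/4 :=
    hTk.eventually_lt_const (by nlinarith)
  have e3 : ∀ᶠ x in nhdsWithin x0 (Set.Ioi x0), k x < 1 := hk0.eventually_lt_const one_pos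
  obtain ⟨b, hbJ, hTb, -⟩ := (e1.and (e2.and e3)).exists
  have hbx0 : x0 < b := hbJ.1
  have hbδ : b < x0 + δ := hbJ.2
  have hb1 : b < 1 := (hJ hbJ).2
  have hbm1 : -1 < b := (hJ hbJ).1
  have hkb : 0 < k b := hkpos b hbJ
  set ρ : ℝ := min (c/8) (k b/8) with hρdef
  have hρ : 0 < ρ := lt_min (by linarith) (by linarith)
  have hρc : ρ ≤ c/8 := min_le_left _ _
  have hρb : ρ ≤ k b/8 := min_le_right _ _
  -- bound for k on (x0, b]
  obtain ⟨u, hu, husub⟩ := mem_nhdsGT_iff_exists_Ioc_subset.1 e3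
  set a' : ℝ := min u ((x0+b)/2) with ha'def
  have ha'1 : x0 < a' := lt_min hu (by linarith)
  have ha'2 : a' < b := (min_le_right _ _).trans_lt (by linarith)
  have hbnd1 : ∀ x ∈ Set.Ioc x0 a', k x < 1 :=
    fun x hx => husub ⟨hx.1, hx.2.trans (min_le_left _ _)⟩
  have hIccsub : Set.Icc a' b ⊆ Set.Ioo x0 (x0+δ) :=
    fun x hx => ⟨ha'1.trans_le hx.1, lt_of_le_of_lt hx.2 hbδ⟩
  obtain ⟨zM, hzMI, hzMmax⟩ := isCompact_Icc.exists_isMaxOn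
    ⟨a', left_mem_Icc.2 ha'2.le⟩ (hk.continuousOn.mono hIccsub)
  set M1 : ℝ := k zM with hM1def
  have hkbnd : ∀ x ∈ Set.Ioc x0 b, k x ≤ max 1 M1 := by
    intro x hx
    rcases le_or_gt x a' with h | h
    · exact (hbnd1 x ⟨hx.1, h⟩).le.trans (le_max_left _ _)
    · exact (hzMmax ⟨h.le, hx.2⟩).trans (le_max_right _ _)
  set B : ℝ := max (c/2) (max 1 M1 + 1) with hBdef
  have hB0 : 0 < B := lt_of_lt_of_le (by linarith : (0:ℝ) < c/2) (le_max_left _ _)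
  set t : ℝ := k1^2/(32*B) with htdef
  have ht : 0 < t := by positivity
  -- eventual properties in n
  have E1 : ∀ᶠ n in Filter.atTop, ∀ x ∈ Set.Ioo x0 (x0+δ),
      dist (k x) (kn n x) < min ρ 1 :=
    Metric.tendstoUniformlyOn_iff.1 hconv0 _ (lt_min hρ one_pos)
  have E2 : Filter.Tendsto
      (fun n => kn n b * iteratedDeriv 2 (kn n) b - (deriv (kn n) b)^2/2) Filter.atTop
      (nhds (k b * iteratedDeriv 2 k b - (deriv k b)^2/2)) :=
    ((hconv0.tendsto_at hbJ).mul (hconv2.tendsto_at hbJ)).sub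
      (((hconv1.tendsto_at hbJ).pow 2).div_const 2)
  have E2' : ∀ᶠ n in Filter.atTop,
      kn n b * iteratedDeriv 2 (kn n) b - (deriv (kn n) b)^2/2 < -k1^2/8 :=
    E2.eventually_lt_const (by nlinarith)
  have E3 : ∀ᶠ n in Filter.atTop,
      (∫ x in (-1:ℝ)..1, kn n x * (iteratedDeriv 3 (kn n) x)^2) < t*k1^2/16 :=
    hD.eventually_lt_const (by positivity)
  obtain ⟨n, hn1, hn2, hn3⟩ := (E1.and (E2'.and E3)).exists
  set f : ℝ → ℝ := kn n with hfdef
  have hf3 : ContDiff ℝ 3 f := hknreg n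
  have hfc : Continuous f := hf3.continuous
  have hf1d : Differentiable ℝ f := hf3.differentiable (by norm_num)
  have hd1d : Differentiable ℝ (deriv f) := by
    rw [← iteratedDeriv_one]
    exact hf3.differentiable_iteratedDeriv 1 (by norm_num)
  have hd2d : Differentiable ℝ (iteratedDeriv 2 f) :=
    hf3.differentiable_iteratedDeriv 2 (by norm_num)
  have hd3c : Continuous (iteratedDeriv 3 f) := hf3.continuous_iteratedDeriv 3 (by norm_num)
  -- kn n x0 bound
  have hfx0 : f x0 ≤ 2*ρ := by
    have hcw : Filter.Tendsto f (nhdsWithin x0 (Set.Ioi x0)) (nhds (f x0)) :=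
      (hfc.continuousAt (x := x0)).continuousWithinAt.tendsto
    refine le_of_tendsto hcw ?_
    have eρ : ∀ᶠ x in nhdsWithin x0 (Set.Ioi x0), k x < ρ := hk0.eventually_lt_const hρ
    filter_upwards [e1, eρ] with x hx hkx
    have hd := hn1 x hx
    rw [Real.dist_eq] at hd
    have hd' : |k x - f x| < ρ := hd.trans_le (min_le_left _ _)
    have := abs_lt.1 hd'
    linarith [this.1, this.2]
  -- the sup point ℓ
  set S : Set ℝ := Set.Icc (-1:ℝ) x0 ∩ {x | c/2 ≤ f x} with hSdef
  have hScl : IsClosed S := isClosed_Icc.inter (isClosed_le continuous_const hfc)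
  have hScomp : IsCompact S := isCompact_Icc.of_isClosed_subset hScl inter_subset_left
  have hSne : S.Nonempty := ⟨-1, ⟨le_rfl, hm1x0⟩, by
    simp only [Set.mem_setOf_eq, hfdef, (hknbc n).1]; linarith⟩
  set l : ℝ := sSup S with hldef
  have hlS : l ∈ S := hScl.csSup_mem hSne hScomp.bddAbove
  have hlx0 : l ≤ x0 := hlS.1.2
  have hlm1 : -1 ≤ l := hlS.1.1
  have hfl : c/2 ≤ f l := hlS.2
  have habove : ∀ x, l < x → x ≤ x0 → f x < c/2 := by
    intro x h1 h2
    by_contra h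
    push_neg at h
    have hx : x ∈ S := ⟨⟨hlm1.trans h1.le, h2⟩, h⟩
    exact absurd (le_csSup hScomp.bddAbove hx) (not_le.2 h1)
  -- the min point
  have hlb : l ≤ b := hlx0.trans hbx0.le
  obtain ⟨xs, hxsI, hxsmin⟩ := isCompact_Icc.exists_isMinOn
    ⟨l, left_mem_Icc.2 hlb⟩ hfc.continuousOn
  have hfxs : f xs ≤ 2*ρ :=
    le_trans (hxsmin ⟨hlx0, hbx0.le⟩) hfx0
  have hfbl : k b - ρ ≤ f b := by
    have hd := hn1 b hbJ
    rw [Real.dist_eq] at hd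
    have hd' : |k b - f b| < ρ := hd.trans_le (min_le_left _ _)
    have := abs_lt.1 hd'
    linarith [this.2]
  have hxsl : l < xs := by
    rcases lt_or_eq_of_le hxsI.1 with h | h
    · exact h
    · exfalso; rw [h] at hfl; linarith
  have hxsb : xs < b := by
    rcases lt_or_eq_of_le hxsI.2 with h | h
    · exact h
    · exfalso; rw [h] at hfxs; linarith
  have hloc : IsLocalMin f xs := hxsmin.isLocalMin (Icc_mem_nhds hxsl hxsb)
  have hd1xs : deriv f xs = 0 := hloc.deriv_eq_zero
  have hd2xs : 0 ≤ iteratedDeriv 2 f xs := secondDeriv_nonneg_of_isLocalMin hf3 hloc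
  have hxs11 : xs ∈ Set.Icc (-1:ℝ) 1 := ⟨hlm1.trans hxsI.1, hxsI.2.trans hb1.le⟩
  have hfxs0 : 0 ≤ f xs := hknnn n xs hxs11
  -- FTC
  have hT : ∀ x, HasDerivAt (fun y => f y * iteratedDeriv 2 f y - (deriv f y)^2/2)
      (f x * iteratedDeriv 3 f x) x := by
    intro x
    have h1 : HasDerivAt f (deriv f x) x := (hf1d x).hasDerivAt
    have h2 : HasDerivAt (deriv f) (iteratedDeriv 2 f x) x := by
      rw [itd2eq]; exact (hd1d x).hasDerivAt
    have h3 : HasDerivAt (iteratedDeriv 2 f) (iteratedDeriv 3 f x) x := by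
      rw [itd3eq]; exact (hd2d x).hasDerivAt
    have := (h1.mul h3).sub ((h2.pow 2).div_const 2)
    refine this.congr_deriv ?_
    norm_num
    ring
  have hintfd3 : IntervalIntegrable (fun x => f x * iteratedDeriv 3 f x) volume xs b :=
    (hfc.mul hd3c).intervalIntegrable _ _
  have hFTC : (∫ x in xs..b, f x * iteratedDeriv 3 f x)
      = (f b * iteratedDeriv 2 f b - (deriv f b)^2/2)
        - (f xs * iteratedDeriv 2 f xs - (deriv f xs)^2/2) :=
    intervalIntegral.integral_eq_sub_of_hasDerivAt (fun x _ => hT x) hintfd3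
  have hI : (∫ x in xs..b, f x * iteratedDeriv 3 f x) < -k1^2/8 := by
    rw [hFTC, hd1xs]
    have hnn := mul_nonneg hfxs0 hd2xs
    nlinarith [hn2]
  -- upper bound via pointwise AM-GM
  set g2 : ℝ → ℝ := fun x => f x * (iteratedDeriv 3 f x)^2 with hg2def
  have hg2c : Continuous g2 := hfc.mul (hd3c.pow 2)
  have hg2nn : ∀ x ∈ Set.Icc (-1:ℝ) 1, 0 ≤ g2 x :=
    fun x hx => mul_nonneg (hknnn n x hx) (sq_nonneg _)
  have hIabs : |∫ x in xs..b, f x * iteratedDeriv 3 f x|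
      ≤ ∫ x in xs..b, |f x * iteratedDeriv 3 f x| :=
    intervalIntegral.abs_integral_le_integral_abs hxsb.le
  have hptw : ∀ x ∈ Set.Icc xs b,
      |f x * iteratedDeriv 3 f x| ≤ t/2 * f x + 1/(2*t) * g2 x := by
    intro x hx
    have hfx : 0 ≤ f x := hknnn n x ⟨(hlm1.trans hxsI.1).trans hx.1, hx.2.trans hb1.le⟩
    have ht' : t ≠ 0 := ne_of_gt ht
    have h2t : (0:ℝ) < 2*t := by linarith
    show |f x * iteratedDeriv 3 f x| ≤ t/2 * f x + 1/(2*t) * (f x * (iteratedDeriv 3 f x)^2)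
    rw [abs_mul, abs_of_nonneg hfx]
    have key : f x * |iteratedDeriv 3 f x| * (2*t)
        ≤ t^2 * f x + f x * (iteratedDeriv 3 f x)^2 := by
      nlinarith [mul_nonneg hfx (sq_nonneg (t - |iteratedDeriv 3 f x|)),
        sq_abs (iteratedDeriv 3 f x)]
    have expand : t/2 * f x + 1/(2*t) * (f x * (iteratedDeriv 3 f x)^2)
        = (t^2 * f x + f x * (iteratedDeriv 3 f x)^2)/(2*t) := by
      field_simp
    rw [expand, le_div_iff₀ h2t]
    exact key
  have hmono1 : (∫ x in xs..b, |f x * iteratedDeriv 3 f x|)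
      ≤ ∫ x in xs..b, (t/2 * f x + 1/(2*t) * g2 x) :=
    intervalIntegral.integral_mono_on hxsb.le
      ((hfc.mul hd3c).abs.intervalIntegrable _ _)
      (((continuous_const.mul hfc).add (continuous_const.mul hg2c)).intervalIntegrable _ _)
      hptw
  have hsplit : (∫ x in xs..b, (t/2 * f x + 1/(2*t) * g2 x))
      = t/2 * (∫ x in xs..b, f x) + 1/(2*t) * (∫ x in xs..b, g2 x) := by
    rw [intervalIntegral.integral_add (f := fun x => t/2 * f x) (g := fun x => 1/(2*t) * g2 x) ((continuous_const.mul hfc).intervalIntegrable _ _)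
      ((continuous_const.mul hg2c).intervalIntegrable _ _),
      intervalIntegral.integral_const_mul, intervalIntegral.integral_const_mul]
  -- bound ∫ f
  have hfB : ∀ x ∈ Set.Icc xs b, f x ≤ B := by
    intro x hx
    rcases le_or_gt x x0 with h | h
    · rcases eq_or_lt_of_le h with rfl | hlt
      · refine hfx0.trans (le_trans (by linarith) (le_max_left (c/2) (max 1 M1 + 1)))
      · have := habove x (lt_of_lt_of_le hxsl hx.1) hlt.le
        exact this.le.trans (le_max_left _ _)
    · have hxJ : x ∈ Set.Ioo x0 (x0+δ) := ⟨h, lt_of_le_of_lt hx.2 hbδ⟩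
      have hd := hn1 x hxJ
      rw [Real.dist_eq] at hd
      have hd' : |k x - f x| < 1 := hd.trans_le (min_le_right _ _)
      have h1 := (abs_lt.1 hd').1
      have h2 : k x ≤ max 1 M1 := hkbnd x ⟨h, hx.2⟩
      have : f x ≤ max 1 M1 + 1 := by linarith
      exact this.trans (le_max_right _ _)
  have hintF : (∫ x in xs..b, f x) ≤ 2*B := by
    have h1 : (∫ x in xs..b, f x) ≤ ∫ x in xs..b, (B : ℝ) :=
      intervalIntegral.integral_mono_on hxsb.le (hfc.intervalIntegrable _ _)
        (intervalIntegrable_const) hfB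
    rw [intervalIntegral.integral_const, smul_eq_mul] at h1
    have hseg : b - xs ≤ 2 := by
      have := hxs11.1; linarith
    nlinarith
  -- bound ∫ g2 by the dissipation
  have hintG : (∫ x in xs..b, g2 x) ≤ ∫ x in (-1:ℝ)..1, g2 x := by
    refine intervalIntegral.integral_mono_interval (by linarith [hxs11.1]) hxsb.le hb1.le ?_
      (hg2c.intervalIntegrable _ _)
    refine (ae_restrict_iff' measurableSet_Ioc).2 (ae_of_all _ ?_)
    intro x hx
    exact hg2nn x ⟨hx.1.le, hx.2⟩
  have hintG' : (∫ x in xs..b, g2 x) ≤ t*k1^2/16 := hintG.trans hn3.le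
  have hintG0 : (0:ℝ) ≤ ∫ x in xs..b, g2 x :=
    intervalIntegral.integral_nonneg hxsb.le
      (fun x hx => hg2nn x ⟨(hlm1.trans hxsI.1).trans hx.1, hx.2.trans hb1.le⟩)
  -- combine
  have hfinal : |∫ x in xs..b, f x * iteratedDeriv 3 f x| ≤ k1^2/16 := by
    have h1 := hIabs.trans (hmono1.trans_eq hsplit)
    have h2 : t/2 * (∫ x in xs..b, f x) ≤ t/2 * (2*B) :=
      mul_le_mul_of_nonneg_left hintF (by positivity)
    have h3 : 1/(2*t) * (∫ x in xs..b, g2 x) ≤ 1/(2*t) * (t*k1^2/16) :=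
      mul_le_mul_of_nonneg_left hintG' (by positivity)
    have h4 : t/2 * (2*B) = k1^2/32 := by
      rw [htdef]; field_simp
    have h5 : 1/(2*t) * (t*k1^2/16) = k1^2/32 := by
      field_simp; ring
    linarith
  have := neg_abs_le (∫ x in xs..b, f x * iteratedDeriv 3 f x)
  linarith
end

section
/- Let P > 0 and let h ∈ H^2((-1,1)) be an even function with h(±1) = 1, h ≥ 0, such that on the open set {h > 0} the distributional third derivative of h vanishes, and h ∈ C^2 near ±1 with ∂_x^2 h(±1) = P. Then h = h_P, where h_P is the steady state: h_P(x) = (P/2)(x^2-1)+1 if P ∈ (0,2], and h_P(x) = (P/2)(|x|-x_P)_+^2 with x_P = 1 - sqrt(2/P) if P > 2. -/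
open Set Filter Topology


private lemma quad_ext {a b c a' b' c' u v : ℝ} (huv : u < v)
    (H : ∀ y ∈ Set.Ioo u v, a*y^2+b*y+c = a'*y^2+b'*y+c') :
    a = a' ∧ b = b' ∧ c = c' := by
  set d := (v - u)/4 with hd
  have hd0 : 0 < d := by rw [hd]; linarith
  have e1 := H (u+d) ⟨by linarith, by rw [hd] at hd0 ⊢; linarith⟩
  have e2 := H (u+2*d) ⟨by linarith, by rw [hd] at hd0 ⊢; linarith⟩
  have e3 := H (u+3*d) ⟨by linarith, by rw [hd] at hd0 ⊢; linarith⟩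
  have key : (a - a')*(2*d^2) = 0 := by linear_combination e1 + e3 - 2*e2
  have hd2 : (0:ℝ) < 2*d^2 := by positivity
  obtain rfl : a = a' := by
    rcases mul_eq_zero.mp key with hk | hk
    · linarith
    · linarith
  have key2 : (b - b')*d = 0 := by linear_combination e2 - e1
  obtain rfl : b = b' := by
    rcases mul_eq_zero.mp key2 with hk | hk
    · linarith
    · linarith
  have key3 : c = c' := by linear_combination e1
  exact ⟨rfl, rfl, key3⟩




private lemma quad_connect {h : ℝ → ℝ} {s e : ℝ} (hse : s < e)
    (H : ∀ x ∈ Set.Ioo s e, ∃ ε > 0, ∃ a b c : ℝ,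
      ∀ y ∈ Set.Ioo (x-ε) (x+ε), y ∈ Set.Ioo s e → h y = a*y^2+b*y+c) :
    ∃ a b c : ℝ, ∀ y ∈ Set.Ioo s e, h y = a*y^2+b*y+c := by
  obtain ⟨ε₁, hε₁, a, b, c, hq1⟩ := H ((s+e)/2) ⟨by linarith, by linarith⟩
  refine ⟨a, b, c, ?_⟩
  by_contra hcon
  push_neg at hcon
  obtain ⟨z, hz, hzne⟩ := hcon
  set U : Set ℝ := {x | ∃ ε > 0, ∀ y ∈ Ioo (x-ε) (x+ε), y ∈ Ioo s e → h y = a*y^2+b*y+c} with hU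
  set V : Set ℝ := {x | ∃ ε > 0, ∃ a' b' c' : ℝ, ¬(a' = a ∧ b' = b ∧ c' = c) ∧
      ∀ y ∈ Ioo (x-ε) (x+ε), y ∈ Ioo s e → h y = a'*y^2+b'*y+c'} with hV
  have hUopen : IsOpen U := by
    rw [isOpen_iff_forall_mem_open]
    rintro x ⟨ε, hε, hx⟩
    refine ⟨Ioo (x-ε) (x+ε), fun x' hx' => ?_, isOpen_Ioo, by constructor <;> [linarith; linarith]⟩
    refine ⟨min (x+ε-x') (x'-(x-ε)), lt_min (by linarith [hx'.2]) (by linarith [hx'.1]), fun y hy hy' => ?_⟩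
    have h1 : min (x+ε-x') (x'-(x-ε)) ≤ x+ε-x' := min_le_left _ _
    have h2 : min (x+ε-x') (x'-(x-ε)) ≤ x'-(x-ε) := min_le_right _ _
    exact hx y ⟨by linarith [hy.1], by linarith [hy.2]⟩ hy'
  have hVopen : IsOpen V := by
    rw [isOpen_iff_forall_mem_open]
    rintro x ⟨ε, hε, a', b', c', hne, hx⟩
    refine ⟨Ioo (x-ε) (x+ε), fun x' hx' => ?_, isOpen_Ioo, by constructor <;> [linarith; linarith]⟩
    refine ⟨min (x+ε-x') (x'-(x-ε)), lt_min (by linarith [hx'.2]) (by linarith [hx'.1]),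
      a', b', c', hne, fun y hy hy' => ?_⟩
    have h1 : min (x+ε-x') (x'-(x-ε)) ≤ x+ε-x' := min_le_left _ _
    have h2 : min (x+ε-x') (x'-(x-ε)) ≤ x'-(x-ε) := min_le_right _ _
    exact hx y ⟨by linarith [hy.1], by linarith [hy.2]⟩ hy'
  have hcover : Ioo s e ⊆ U ∪ V := by
    intro x hx
    obtain ⟨ε, hε, a', b', c', hq'⟩ := H x hx
    by_cases hcase : a' = a ∧ b' = b ∧ c' = c
    · obtain ⟨rfl, rfl, rfl⟩ := hcase
      exact Or.inl ⟨ε, hε, hq'⟩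
    · exact Or.inr ⟨ε, hε, a', b', c', hcase, hq'⟩
  have hUne : ((s+e)/2) ∈ Ioo s e ∩ U :=
    ⟨⟨by linarith, by linarith⟩, ε₁, hε₁, hq1⟩
  have hVne : z ∈ Ioo s e ∩ V := by
    refine ⟨hz, ?_⟩
    rcases hcover hz with hzU | hzV
    · obtain ⟨ε, hε, hh⟩ := hzU
      exact absurd (hh z ⟨by linarith, by linarith⟩ hz) hzne
    · exact hzV
  obtain ⟨x, hxIoo, hxU, hxV⟩ := isPreconnected_Ioo U V hUopen hVopen hcover ⟨_, hUne⟩ ⟨z, hVne⟩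
  obtain ⟨εU, hεU, hUx⟩ := hxU
  obtain ⟨εV, hεV, a', b', c', hne', hVx⟩ := hxV
  set u' := max (max (x-εU) (x-εV)) s with hu'
  set v' := min (min (x+εU) (x+εV)) e with hv'
  have h1 : u' < x := max_lt (max_lt (by linarith) (by linarith)) hxIoo.1
  have h2 : x < v' := lt_min (lt_min (by linarith) (by linarith)) hxIoo.2
  have hagree : ∀ y ∈ Ioo u' v', a'*y^2+b'*y+c' = a*y^2+b*y+c := by
    intro y hy
    have hs1 : s ≤ u' := le_max_right _ _
    have hs2 : v' ≤ e := min_le_right _ _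
    have hu1 : x - εU ≤ u' := le_trans (le_max_left _ _) (le_max_left _ _)
    have hu2 : x - εV ≤ u' := le_trans (le_max_right _ _) (le_max_left _ _)
    have hv1 : v' ≤ x + εU := le_trans (min_le_left _ _) (min_le_left _ _)
    have hv2 : v' ≤ x + εV := le_trans (min_le_left _ _) (min_le_right _ _)
    have hyIoo : y ∈ Ioo s e := ⟨lt_of_le_of_lt hs1 hy.1, lt_of_lt_of_le hy.2 hs2⟩
    have hyU : y ∈ Ioo (x-εU) (x+εU) := ⟨lt_of_le_of_lt hu1 hy.1, lt_of_lt_of_le hy.2 hv1⟩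
    have hyV : y ∈ Ioo (x-εV) (x+εV) := ⟨lt_of_le_of_lt hu2 hy.1, lt_of_lt_of_le hy.2 hv2⟩
    exact (hVx y hyV hyIoo).symm.trans (hUx y hyU hyIoo)
  obtain ⟨ha, hb, hc⟩ := quad_ext (lt_trans h1 h2) hagree
  exact hne' ⟨ha, hb, hc⟩




private lemma endpoint_eq {h q : ℝ → ℝ} {u v w : ℝ} (huv : u < v)
    (hc : ContinuousWithinAt h (Set.Ioo u v) w) (hqc : Continuous q)
    (hq : ∀ y ∈ Set.Ioo u v, h y = q y) (hw : w ∈ Set.Icc u v) : h w = q w := by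
  have hcl : w ∈ closure (Set.Ioo u v) := by
    rw [closure_Ioo (ne_of_lt huv)]; exact hw
  have hne : (𝓝[Set.Ioo u v] w).NeBot := mem_closure_iff_nhdsWithin_neBot.mp hcl
  refine tendsto_nhds_unique hc ?_
  refine (hqc.continuousWithinAt (s := Set.Ioo u v) (x := w)).congr' ?_
  filter_upwards [self_mem_nhdsWithin] with y hy using (hq y hy).symm

private lemma comp_quad {h : ℝ → ℝ} (hcont : ContinuousOn h (Set.Icc (-1:ℝ) 1))
    (hquad : ∀ x ∈ Set.Ioo (-1:ℝ) 1, 0 < h x →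
      ∃ ε > 0, ∃ a b c : ℝ, ∀ y ∈ Set.Ioo (x-ε) (x+ε), h y = a*y^2 + b*y + c)
    {u v : ℝ} (hu : -1 ≤ u) (hv : v ≤ 1) (huv : u < v)
    (hpos : ∀ y ∈ Set.Ioo u v, 0 < h y) :
    ∃ a b c : ℝ, ∀ y ∈ Set.Icc u v, h y = a*y^2+b*y+c := by
  obtain ⟨a, b, c, hq⟩ := quad_connect huv (fun x hx => by
    obtain ⟨ε, hε, a, b, c, hqq⟩ := hquad x ⟨lt_of_le_of_lt hu hx.1, lt_of_lt_of_le hx.2 hv⟩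
      (hpos x hx)
    exact ⟨ε, hε, a, b, c, fun y hy _ => hqq y hy⟩)
  have hsub : Set.Ioo u v ⊆ Set.Icc (-1:ℝ) 1 := fun y hy =>
    ⟨le_trans hu (le_of_lt hy.1), le_trans (le_of_lt hy.2) hv⟩
  have hqc : Continuous (fun y : ℝ => a*y^2+b*y+c) := by continuity
  refine ⟨a, b, c, fun y hy => ?_⟩
  rcases eq_or_lt_of_le hy.1 with heq1 | hy1
  · rw [← heq1]
    exact endpoint_eq huv ((hcont u ⟨hu, le_trans (le_of_lt huv) hv⟩).mono hsub) hqc hq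
      ⟨le_rfl, le_of_lt huv⟩
  rcases eq_or_lt_of_le hy.2 with heq2 | hy2
  · rw [heq2]
    exact endpoint_eq huv ((hcont v ⟨le_trans hu (le_of_lt huv), hv⟩).mono hsub) hqc hq
      ⟨le_of_lt huv, le_rfl⟩
  exact hq y ⟨hy1, hy2⟩

private lemma quad_hasDeriv (a b c p : ℝ) :
    HasDerivAt (fun y : ℝ => a*y^2+b*y+c) (2*a*p+b) p := by
  have h1 := (((hasDerivAt_pow 2 p).const_mul a).add ((hasDerivAt_id p).const_mul b)).add_const c
  refine h1.congr_deriv ?_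
  push_cast
  ring

private lemma quad_deriv {h : ℝ → ℝ} {a b c w z p : ℝ} (hwz : w < z) (hp : p ∈ Set.Icc w z)
    (heq : ∀ y ∈ Set.Icc w z, h y = a*y^2+b*y+c) (hd : DifferentiableAt ℝ h p) :
    deriv h p = 2*a*p + b := by
  have hu : UniqueDiffWithinAt ℝ (Set.Icc w z) p := (uniqueDiffOn_Icc hwz) p hp
  have hq := quad_hasDeriv a b c p
  calc deriv h p = derivWithin h (Set.Icc w z) p := (hd.derivWithin hu).symm
    _ = derivWithin (fun y => a*y^2+b*y+c) (Set.Icc w z) p := derivWithin_congr heq (heq p hp)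
    _ = 2*a*p+b := by rw [hq.differentiableAt.derivWithin hu, hq.deriv]








set_option maxHeartbeats 2000000 in
theorem stmt14 (P : ℝ) (hP : 0 < P) (h : ℝ → ℝ) (δ : ℝ) (hδ0 : 0 < δ) (hδ1 : δ < 1)
    (heven : ∀ x, h (-x) = h x)
    (hbc : h 1 = 1)
    (hnn : ∀ x ∈ Set.Icc (-1:ℝ) 1, 0 ≤ h x)
    (hC1 : ContDiffOn ℝ 1 h (Set.Icc (-1) 1))
    (hC2 : ContDiffOn ℝ 2 h (Set.Icc (1-δ) 1))
    (hP1 : iteratedDerivWithin 2 h (Set.Icc (1-δ) 1) 1 = P)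
    (hquad : ∀ x ∈ Set.Ioo (-1:ℝ) 1, 0 < h x →
      ∃ ε > 0, ∃ a b c : ℝ, ∀ y ∈ Set.Ioo (x-ε) (x+ε), h y = a*y^2 + b*y + c) :
    Set.EqOn h (fun x => if P ≤ 2 then P/2*(x^2-1)+1
      else P/2 * (max (|x| - (1 - Real.sqrt (2/P))) 0)^2) (Set.Icc (-1) 1) := by
  have hcont : ContinuousOn h (Set.Icc (-1:ℝ) 1) := hC1.continuousOn
  have hm1 : h (-1) = 1 := by rw [heven 1, hbc]
  set Z : Set ℝ := {x ∈ Set.Icc (-1:ℝ) 1 | h x = 0} with hZdef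
  have hZclosed : IsClosed Z := by
    have : Z = Set.Icc (-1:ℝ) 1 ∩ h ⁻¹' {0} := by
      ext x; simp [hZdef, Set.mem_sep_iff]
    rw [this]
    exact hcont.preimage_isClosed_of_isClosed isClosed_Icc isClosed_singleton
  have hZbdd : BddAbove (Z ∪ {-1}) := by
    refine ⟨1, ?_⟩
    rintro x (hx | hx)
    · exact hx.1.2
    · simp only [Set.mem_singleton_iff] at hx; rw [hx]; norm_num
  have hZne : (Z ∪ {-1}).Nonempty := ⟨-1, Or.inr rfl⟩
  set t₀ := sSup (Z ∪ {-1}) with ht₀def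
  have ht₀mem : t₀ ∈ Z ∪ {-1} :=
    (hZclosed.union isClosed_singleton).csSup_mem hZne hZbdd
  have ht₀ge : -1 ≤ t₀ := le_csSup hZbdd (Or.inr rfl)
  have ht₀le : t₀ ≤ 1 := by
    refine csSup_le hZne ?_
    rintro x (hx | hx)
    · exact hx.1.2
    · simp only [Set.mem_singleton_iff] at hx; rw [hx]; norm_num
  have ht₀lt : t₀ < 1 := by
    rcases ht₀mem with hm | hm
    · refine lt_of_le_of_ne ht₀le (fun he => ?_)
      rw [he] at hm
      have h2 := hm.2
      rw [hbc] at h2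
      exact one_ne_zero h2
    · simp only [Set.mem_singleton_iff] at hm; rw [hm]; norm_num
  have hpos : ∀ y ∈ Set.Ioo t₀ (1:ℝ), 0 < h y := by
    intro y hy
    have hy1 : y ∈ Set.Icc (-1:ℝ) 1 := ⟨le_trans ht₀ge (le_of_lt hy.1), le_of_lt hy.2⟩
    rcases (hnn y hy1).lt_or_eq with h' | h'
    · exact h'
    · exact absurd (le_csSup hZbdd (Or.inl ⟨hy1, h'.symm⟩)) (not_le.mpr hy.1)
  obtain ⟨a, b, c, hq⟩ := comp_quad hcont hquad ht₀ge le_rfl ht₀lt hpos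
  have hq1 : a*1^2+b*1+c = 1 := by
    rw [← hq 1 ⟨le_of_lt ht₀lt, le_rfl⟩, hbc]
  -- second derivative gives 2*a = P
  have hud : UniqueDiffOn ℝ (Set.Icc (1-δ) 1) := uniqueDiffOn_Icc (by linarith)
  have h1mem : (1:ℝ) ∈ Set.Icc (1-δ) 1 := ⟨by linarith, le_rfl⟩
  have hev : h =ᶠ[𝓝[Set.Icc (1-δ) 1] 1] (fun y => a*y^2+b*y+c) := by
    have hIoi : Set.Ioi t₀ ∈ 𝓝 (1:ℝ) := Ioi_mem_nhds ht₀lt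
    filter_upwards [nhdsWithin_le_nhds hIoi, self_mem_nhdsWithin] with y hy1 hy2
    exact hq y ⟨le_of_lt hy1, hy2.2⟩
  have heq2 : iteratedDerivWithin 2 h (Set.Icc (1-δ) 1) 1
      = iteratedDerivWithin 2 (fun y => a*y^2+b*y+c) (Set.Icc (1-δ) 1) 1 := by
    simp only [iteratedDerivWithin]
    rw [hev.iteratedFDerivWithin_eq (hq 1 ⟨le_of_lt ht₀lt, le_rfl⟩) 2]
  have hqderiv : ∀ y ∈ Set.Icc (1-δ) (1:ℝ),
      derivWithin (fun x => a*x^2+b*x+c) (Set.Icc (1-δ) 1) y = 2*a*y+b := by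
    intro y hy
    have hdq := quad_hasDeriv a b c y
    rw [hdq.differentiableAt.derivWithin (hud y hy), hdq.deriv]
  have hcomp : iteratedDerivWithin 2 (fun y => a*y^2+b*y+c) (Set.Icc (1-δ) 1) 1 = 2*a := by
    have h21 : (2:ℕ) = 1 + 1 := rfl
    rw [h21, iteratedDerivWithin_succ]
    have hcongr : derivWithin (iteratedDerivWithin 1 (fun y => a*y^2+b*y+c) (Set.Icc (1-δ) 1))
        (Set.Icc (1-δ) 1) 1 = derivWithin (fun y => 2*a*y+b) (Set.Icc (1-δ) 1) 1 := by
      refine derivWithin_congr (fun y hy => ?_) ?_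
      · rw [iteratedDerivWithin_one]
        exact hqderiv y hy
      · rw [iteratedDerivWithin_one]
        exact hqderiv 1 h1mem
    rw [hcongr]
    have hlin : HasDerivAt (fun y : ℝ => 2*a*y+b) (2*a) 1 := by
      have := ((hasDerivAt_id (1:ℝ)).const_mul (2*a)).add_const b
      simpa using this
    rw [hlin.differentiableAt.derivWithin (hud 1 h1mem), hlin.deriv]
  have ha : 2*a = P := by
    rw [← hcomp, ← heq2, hP1]
  -- derivative tools
  have hdiff : ∀ w ∈ Set.Ioo (-1:ℝ) 1, DifferentiableAt ℝ h w := fun w hw =>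
    (hC1.differentiableOn one_ne_zero).differentiableAt (Icc_mem_nhds hw.1 hw.2)
  have hderiv0 : ∀ w ∈ Set.Ioo (-1:ℝ) 1, h w = 0 → deriv h w = 0 := by
    intro w hw hw0
    have hmin : IsLocalMin h w := by
      filter_upwards [Icc_mem_nhds hw.1 hw.2] with y hy
      rw [hw0]; exact hnn y hy
    exact hmin.deriv_eq_zero
  rcases ht₀mem with hm | hm
  · -- Case B: t₀ is a zero of h
    have ht0z : h t₀ = 0 := hm.2
    have ht₀gt : -1 < t₀ := by
      refine lt_of_le_of_ne ht₀ge (fun he => ?_)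
      rw [← he, hm1] at ht0z
      exact one_ne_zero ht0z
    have ht₀Ioo : t₀ ∈ Set.Ioo (-1:ℝ) 1 := ⟨ht₀gt, ht₀lt⟩
    have ht₀0 : 0 ≤ t₀ := by
      by_contra hneg
      push_neg at hneg
      have hmz : -t₀ ∈ Z := by
        refine ⟨⟨by linarith [hm.1.2], by linarith [hm.1.1]⟩, ?_⟩
        rw [heven t₀]; exact ht0z
      have := le_csSup hZbdd (Or.inl hmz)
      linarith
    have hqt0 : a*t₀^2+b*t₀+c = 0 := by
      rw [← hq t₀ ⟨le_rfl, le_of_lt ht₀lt⟩]; exact ht0z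
    have hder : 2*a*t₀+b = 0 := by
      have hqd := quad_deriv ht₀lt ⟨le_rfl, le_of_lt ht₀lt⟩ hq (hdiff t₀ ht₀Ioo)
      rw [hderiv0 t₀ ht₀Ioo ht0z] at hqd
      exact hqd.symm
    have hsq : P/2 * (1-t₀)^2 = 1 := by
      linear_combination hq1 - hqt0 + (t₀-1)*hder - ((1-t₀)^2/2)*ha
    have hP2' : 2 ≤ P := by nlinarith [hsq, ht₀0, ht₀lt, hP]
    have ht₀eq : t₀ = 1 - Real.sqrt (2/P) := by
      have h2P : (2:ℝ)/P = (1-t₀)^2 := by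
        field_simp
        nlinarith [hsq]
      rw [h2P, Real.sqrt_sq (by linarith : (0:ℝ) ≤ 1 - t₀)]
      ring
    -- h vanishes on [0, t₀]
    have hZbddBelow : BddBelow (Z ∩ Set.Ici 0) := ⟨0, fun y hy => hy.2⟩
    have hzero : ∀ x₂ ∈ Set.Ico (0:ℝ) t₀, h x₂ = 0 := by
      intro x₂ hx₂
      by_contra hpos₂
      have hx₂Icc : x₂ ∈ Set.Icc (-1:ℝ) 1 := ⟨by linarith [hx₂.1], by linarith [hx₂.2, ht₀lt]⟩
      have hx₂pos : 0 < h x₂ := lt_of_le_of_ne (hnn x₂ hx₂Icc) (Ne.symm hpos₂)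
      have hZvne : (Z ∩ Set.Ici x₂).Nonempty := ⟨t₀, hm, le_of_lt hx₂.2⟩
      have hZvbdd : BddBelow (Z ∩ Set.Ici x₂) := ⟨x₂, fun y hy => hy.2⟩
      have hZvclosed : IsClosed (Z ∩ Set.Ici x₂) := hZclosed.inter isClosed_Ici
      set v := sInf (Z ∩ Set.Ici x₂) with hvdef
      have hvmem : v ∈ Z ∩ Set.Ici x₂ := hZvclosed.csInf_mem hZvne hZvbdd
      have hvx : x₂ < v := by
        rcases lt_or_eq_of_le (Set.mem_Ici.mp hvmem.2 : x₂ ≤ v) with h' | h'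
        · exact h'
        · exact absurd (h' ▸ hvmem.1.2) hpos₂
      have hvle : v ≤ t₀ := csInf_le hZvbdd ⟨hm, le_of_lt hx₂.2⟩
      have hv1 : v < 1 := lt_of_le_of_lt hvle ht₀lt
      have hnegv : -v ∈ Z := by
        refine ⟨⟨by linarith [hvmem.1.1.2], by linarith [hvmem.1.1.1]⟩, ?_⟩
        rw [heven v]; exact hvmem.1.2
      have hZune : (Z ∩ Set.Icc (-v) x₂).Nonempty :=
        ⟨-v, hnegv, le_rfl, by linarith [hx₂.1]⟩
      have hZubdd : BddAbove (Z ∩ Set.Icc (-v) x₂) := ⟨x₂, fun y hy => hy.2.2⟩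
      have hZuclosed : IsClosed (Z ∩ Set.Icc (-v) x₂) := hZclosed.inter isClosed_Icc
      set u := sSup (Z ∩ Set.Icc (-v) x₂) with hudef
      have humem : u ∈ Z ∩ Set.Icc (-v) x₂ := hZuclosed.csSup_mem hZune hZubdd
      have hux : u < x₂ := by
        rcases lt_or_eq_of_le (humem.2.2 : u ≤ x₂) with h' | h'
        · exact h'
        · exact absurd (h' ▸ humem.1.2) hpos₂
      have huv : u < v := lt_trans hux hvx
      have hu1 : -1 < u := by
        have h1 := humem.2.1
        linarith
      have hposuv : ∀ y ∈ Set.Ioo u v, 0 < h y := by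
        intro y hy
        have hyIcc : y ∈ Set.Icc (-1:ℝ) 1 := ⟨by linarith [hy.1], by linarith [hy.2]⟩
        rcases (hnn y hyIcc).lt_or_eq with h' | h'
        · exact h'
        exfalso
        have hyZ : y ∈ Z := ⟨hyIcc, h'.symm⟩
        rcases le_or_gt x₂ y with hc' | hc'
        · exact absurd (csInf_le hZvbdd ⟨hyZ, hc'⟩) (not_le.mpr hy.2)
        · refine absurd (le_csSup hZubdd ⟨hyZ, ?_, le_of_lt hc'⟩) (not_le.mpr hy.1)
          linarith [hy.1, humem.2.1]
      obtain ⟨a₂, b₂, c₂, hq₂⟩ := comp_quad hcont hquad (le_of_lt hu1) (le_of_lt hv1) huv hposuv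
      have huIoo : u ∈ Set.Ioo (-1:ℝ) 1 := ⟨hu1, by linarith⟩
      have hvIoo : v ∈ Set.Ioo (-1:ℝ) 1 := ⟨by linarith, hv1⟩
      have e_u : deriv h u = 2*a₂*u + b₂ :=
        quad_deriv huv ⟨le_rfl, le_of_lt huv⟩ hq₂ (hdiff u huIoo)
      have e_v : deriv h v = 2*a₂*v + b₂ :=
        quad_deriv huv ⟨le_of_lt huv, le_rfl⟩ hq₂ (hdiff v hvIoo)
      rw [hderiv0 u huIoo humem.1.2] at e_u
      rw [hderiv0 v hvIoo hvmem.1.2] at e_v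
      have ha₂ : a₂ = 0 := by
        have hkey : 2*a₂*(u-v) = 0 := by linarith
        rcases mul_eq_zero.mp hkey with h' | h'
        · linarith
        · linarith
      have hb₂ : b₂ = 0 := by rw [ha₂] at e_u; linarith
      have hc₂ : c₂ = 0 := by
        have := hq₂ u ⟨le_rfl, le_of_lt huv⟩
        rw [humem.1.2, ha₂, hb₂] at this
        linarith [this]
      have : h x₂ = 0 := by
        rw [hq₂ x₂ ⟨le_of_lt hux, le_of_lt hvx⟩, ha₂, hb₂, hc₂]
        ring
      exact hpos₂ this
    have hzero' : ∀ x ∈ Set.Icc (0:ℝ) t₀, h x = 0 := by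
      intro x hx
      rcases lt_or_eq_of_le hx.2 with h' | h'
      · exact hzero x ⟨hx.1, h'⟩
      · rw [h']; exact ht0z
    rcases eq_or_lt_of_le hP2' with hPeq | hPgt
    · -- P = 2
      have ht00 : t₀ = 0 := by
        rw [ht₀eq, ← hPeq]
        norm_num
      have hb0 : b = 0 := by
        have h' := hder
        rw [ht00] at h'
        linarith
      have hc0 : c = 0 := by
        have h' := hqt0
        rw [ht00] at h'
        norm_num at h'
        linarith [h']
      have ha1 : a = 1 := by
        have h' : a + b + c = 1 := by linarith [hq1]
        have h'' : P = 2 := hPeq.symm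
        linarith [ha]
      have key : ∀ y ∈ Set.Icc (0:ℝ) 1, h y = P/2*(y^2-1)+1 := by
        intro y hy
        have hyIcc : y ∈ Set.Icc t₀ 1 := by rw [ht00]; exact hy
        rw [hq y hyIcc, ha1, hb0, hc0, ← hPeq]
        ring
      intro x hx
      simp only
      rw [if_pos (le_of_eq hPeq.symm)]
      rcases le_or_gt 0 x with hx0 | hx0
      · exact key x ⟨hx0, hx.2⟩
      · rw [← heven x, key (-x) ⟨by linarith, by linarith [hx.1]⟩]
        ring
    · -- P > 2
      have key : ∀ y ∈ Set.Icc (0:ℝ) 1, h y = P/2 * (max (y - t₀) 0)^2 := by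
        intro y hy
        rcases le_or_gt y t₀ with hyt | hyt
        · rw [hzero' y ⟨hy.1, hyt⟩, max_eq_right (by linarith : y - t₀ ≤ 0)]
          ring
        · rw [hq y ⟨le_of_lt hyt, hy.2⟩, max_eq_left (by linarith : (0:ℝ) ≤ y - t₀)]
          linear_combination ((y-t₀)^2/2)*ha + (y-t₀)*hder + hqt0
      intro x hx
      simp only
      rw [if_neg (not_le.mpr hPgt), ← ht₀eq]
      rcases le_or_gt 0 x with hx0 | hx0
      · rw [abs_of_nonneg hx0]
        exact key x ⟨hx0, hx.2⟩
      · rw [abs_of_neg hx0, ← heven x]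
        exact key (-x) ⟨by linarith, by linarith [hx.1]⟩
  · -- Case A: t₀ = -1, h > 0 on (-1,1)
    simp only [Set.mem_singleton_iff] at hm
    rw [hm] at hq
    have he1 := hq (1/2) ⟨by norm_num, by norm_num⟩
    have he2 := hq (-(1/2)) ⟨by norm_num, by norm_num⟩
    have he0 := hq 0 ⟨by norm_num, by norm_num⟩
    have heev := heven (1/2)
    rw [he1, he2] at heev
    have hb0 : b = 0 := by nlinarith [heev]
    have hc : c = 1 - P/2 := by
      have h1 : a + b + c = 1 := by linarith [hq1]
      linarith [ha]
    have hP2 : P ≤ 2 := by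
      have h0 : 0 ≤ h 0 := hnn 0 ⟨by norm_num, by norm_num⟩
      rw [he0] at h0
      nlinarith [h0]
    intro x hx
    simp only
    rw [if_pos hP2, hq x hx]
    linear_combination x^2/2 * ha + x*hb0 + hc
end
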